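/- arXiv:2201.13122 — 4 statements merged into one kernel-verified Lean document; each statement's English description precedes it below -/
import Mathlib

section
/- Let β* ∈ (0,∞) be such that i(β) > 0 for 0 < β < β* and i(β) < 0 for β > β*. Then the fibering map j is strictly increasing on (0, β*], strictly decreasing on [β*, ∞); consequently j attains its maximum over (0,∞) at β = β*, and j(β*) > 0. -/
lemma stmt_3_deriv (p A B C : ℝ) (hp : 1 < p) {β : ℝ} (hβ : 0 < β) :
    HasDerivAt (fun β : ℝ => A / 2 * β ^ 2 - β ^ (p + 1) / (p + 1) * (B + C * Real.log β)
              + C / (p + 1) ^ 2 * β ^ (p + 1))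
      (A * β - β ^ p * (B + C * Real.log β)) β := by
  have hq : (0:ℝ) < p + 1 := by linarith
  have h1 : HasDerivAt (fun x : ℝ => x ^ (p+1)) ((p+1) * β ^ p) β := by
    have := Real.hasDerivAt_rpow_const (x := β) (p := p+1) (Or.inl hβ.ne')
    simpa using this
  have h2 : HasDerivAt Real.log β⁻¹ β := Real.hasDerivAt_log hβ.ne'
  have h3 : HasDerivAt (fun x : ℝ => A / 2 * x ^ 2) (A / 2 * (2 * β ^ 1)) β :=
    (hasDerivAt_pow 2 β).const_mul _
  have h4 : HasDerivAt (fun x : ℝ => x ^ (p+1) / (p+1) * (B + C * Real.log x))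
      ((p+1) * β ^ p / (p+1) * (B + C * Real.log β) + β ^ (p+1) / (p+1) * (C * β⁻¹)) β :=
    by have h := (h1.div_const (p+1)).mul ((hasDerivAt_const β B).add (h2.const_mul C)); simp only [zero_add] at h; exact h
  have h5 := (h3.sub h4).add (h1.const_mul (C / (p+1)^2))
  refine h5.congr_deriv ?_
  have hr : β ^ (p+1) = β ^ p * β := by
    rw [Real.rpow_add hβ, Real.rpow_one]
  rw [hr]
  field_simp
  ring

/-- If `β* > 0` is such that `i(β) > 0` on `(0, β*)` and `i(β) < 0` on `(β*, ∞)`,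
then `j` is strictly increasing on `(0, β*]`, strictly decreasing on `[β*, ∞)`, attains
its maximum over `(0,∞)` at `β*`, and `j(β*) > 0`. -/
theorem stmt_3 (p A B C : ℝ) (hp : 1 < p) (hA : 0 < A) (hC : 0 < C)
    (j i : ℝ → ℝ)
    (hj : ∀ β : ℝ, 0 < β →
      j β = A / 2 * β ^ 2 - β ^ (p + 1) / (p + 1) * (B + C * Real.log β)
              + C / (p + 1) ^ 2 * β ^ (p + 1))
    (hi : ∀ β : ℝ, 0 < β →
      i β = A * β ^ 2 - β ^ (p + 1) * (B + C * Real.log β))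
    (βs : ℝ) (hβs : 0 < βs)
    (hpos : ∀ β : ℝ, 0 < β → β < βs → 0 < i β)
    (hneg : ∀ β : ℝ, βs < β → i β < 0) :
    StrictMonoOn j (Set.Ioc 0 βs) ∧ StrictAntiOn j (Set.Ici βs) ∧
      (∀ β : ℝ, 0 < β → j β ≤ j βs) ∧ 0 < j βs := by
  have hq : (0:ℝ) < p + 1 := by linarith
  -- j has derivative i β / β at every β > 0
  have key : ∀ β : ℝ, 0 < β → HasDerivAt j (i β / β) β := by
    intro β hβ
    have hd := stmt_3_deriv p A B C hp hβ
    have heq : j =ᶠ[nhds β] (fun β : ℝ => A / 2 * β ^ 2 -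
        β ^ (p + 1) / (p + 1) * (B + C * Real.log β) + C / (p + 1) ^ 2 * β ^ (p + 1)) := by
      filter_upwards [IsOpen.mem_nhds isOpen_Ioi (Set.mem_Ioi.mpr hβ)] with x hx
      exact hj x hx
    have hd' := hd.congr_of_eventuallyEq heq
    have hval : i β / β = A * β - β ^ p * (B + C * Real.log β) := by
      rw [hi β hβ]
      have hr : β ^ (p+1) = β ^ p * β := by rw [Real.rpow_add hβ, Real.rpow_one]
      rw [hr]
      field_simp
    rw [hval]
    exact hd'
  have hdiff : ∀ β : ℝ, 0 < β → deriv j β = i β / β := fun β hβ => (key β hβ).deriv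
  have hmono : StrictMonoOn j (Set.Ioc 0 βs) := by
    apply strictMonoOn_of_deriv_pos (convex_Ioc 0 βs)
    · intro x hx
      exact ((key x hx.1).continuousAt).continuousWithinAt
    · intro x hx
      rw [interior_Ioc] at hx
      rw [hdiff x hx.1]
      exact div_pos (hpos x hx.1 hx.2) hx.1
  have hanti : StrictAntiOn j (Set.Ici βs) := by
    apply strictAntiOn_of_deriv_neg (convex_Ici βs)
    · intro x hx
      exact ((key x (lt_of_lt_of_le hβs hx)).continuousAt).continuousWithinAt
    · intro x hx
      rw [interior_Ici] at hx
      rw [hdiff x (hβs.trans hx)]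
      exact div_neg_of_neg_of_pos (hneg x hx) (hβs.trans hx)
  have hmax : ∀ β : ℝ, 0 < β → j β ≤ j βs := by
    intro β hβ
    rcases lt_trichotomy β βs with h | h | h
    · exact (hmono ⟨hβ, h.le⟩ ⟨hβs, le_refl _⟩ h).le
    · rw [h]
    · exact (hanti (Set.self_mem_Ici) (Set.mem_Ici.mpr h.le) h).le
  refine ⟨hmono, hanti, hmax, ?_⟩
  -- positivity at βs : use j βs > j (βs/2) > 0
  set b := βs / 2 with hb
  have hb0 : 0 < b := by positivity
  have hblt : b < βs := by simp [hb]; linarith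
  have hib : 0 < i b := hpos b hb0 hblt
  have hjb : 0 < j b := by
    rw [hi b hb0] at hib
    rw [hj b hb0]
    have hb2 : 0 < b ^ 2 := by positivity
    have hbp : 0 < b ^ (p + 1) := Real.rpow_pos_of_pos hb0 _
    have h1 : b ^ (p+1) * (B + C * Real.log b) < A * b ^ 2 := by linarith
    have h2 : b ^ (p+1) / (p+1) * (B + C * Real.log b) < A * b ^ 2 / (p+1) := by
      rw [div_mul_eq_mul_div]
      exact (div_lt_div_iff_of_pos_right hq).mpr h1
    have h3 : A * b ^ 2 / (p+1) < A * b ^ 2 / 2 :=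
      div_lt_div_of_pos_left (by positivity) (by norm_num) (by linarith)
    have hCp : 0 < C / (p+1)^2 * b ^ (p+1) := by positivity
    have he : A / 2 * b ^ 2 = A * b ^ 2 / 2 := by ring
    linarith
  calc (0:ℝ) < j b := hjb
    _ < j βs := hmono ⟨hb0, hblt.le⟩ ⟨hβs, le_refl _⟩ hblt
end

section
/- Let (X, μ) be a measure space with μ(X) < ∞, let p > 1 be real, and set γ = (2p+2)/(2p+1). Let f : X → ℝ be measurable with x ↦ |f(x)|^(p+1) integrable. Then the function x ↦ (|f(x)|^p·|log|f(x)||)^γ is integrable (with the convention log 0 = 0) and ∫_X (|f|^p·|log|f||)^γ dμ ≤ (e·p)^(−γ)·μ(X) + 2^γ·∫_X |f|^(p+1) dμ. -/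
open MeasureTheory

private lemma neg_mul_log_le (s : ℝ) (hs : 0 < s) :
    s * (-Real.log s) ≤ (Real.exp 1)⁻¹ := by
  have h : Real.log (s⁻¹ / Real.exp 1) ≤ s⁻¹ / Real.exp 1 - 1 :=
    Real.log_le_sub_one_of_pos (by positivity)
  rw [Real.log_div (by positivity) (Real.exp_ne_zero 1), Real.log_exp,
    Real.log_inv] at h
  have h2 : -Real.log s ≤ s⁻¹ / Real.exp 1 := by linarith
  calc s * (-Real.log s) ≤ s * (s⁻¹ / Real.exp 1) := by
        exact mul_le_mul_of_nonneg_left h2 hs.le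
    _ = (Real.exp 1)⁻¹ := by field_simp

private lemma key_bound (p γ : ℝ) (hp : 1 < p) (hγ : γ = (2 * p + 2) / (2 * p + 1))
    (t : ℝ) (ht : 0 ≤ t) :
    (t ^ p * |Real.log t|) ^ γ ≤ (Real.exp 1 * p) ^ (-γ) + 2 ^ γ * t ^ (p + 1) := by
  have hp0 : 0 < p := by linarith
  have hγ0 : 0 < γ := by
    rw [hγ]; apply div_pos <;> linarith
  have hC1 : (0:ℝ) ≤ (Real.exp 1 * p) ^ (-γ) := by positivity
  have hC2 : (0:ℝ) ≤ 2 ^ γ * t ^ (p + 1) := by positivity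
  rcases eq_or_lt_of_le ht with h0 | h0
  · rw [← h0, Real.zero_rpow (ne_of_gt hp0), Real.log_zero, abs_zero, mul_zero,
      Real.zero_rpow (ne_of_gt hγ0)]
    positivity
  rcases le_or_gt t 1 with h1 | h1
  · -- t ≤ 1
    have hlog : Real.log t ≤ 0 := Real.log_nonpos h0.le h1
    have habs : |Real.log t| = -Real.log t := abs_of_nonpos hlog
    have hs : 0 < t ^ p := Real.rpow_pos_of_pos h0 p
    have hkey : t ^ p * |Real.log t| ≤ (Real.exp 1 * p)⁻¹ := by
      rw [habs]
      have := neg_mul_log_le (t ^ p) hs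
      rw [Real.log_rpow h0] at this
      have h3 : t ^ p * -Real.log t = (t ^ p * -(p * Real.log t)) / p := by
        field_simp
      rw [h3]
      rw [mul_inv]
      rw [div_le_iff₀ hp0] at *
      calc t ^ p * -(p * Real.log t) = t ^ p * -(p * Real.log t) := rfl
        _ ≤ (Real.exp 1)⁻¹ := by
            have : t ^ p * -(p * Real.log t) = t ^ p * -Real.log (t ^ p) := by
              rw [Real.log_rpow h0]
            rw [this]; exact neg_mul_log_le (t ^ p) hs
        _ = (Real.exp 1)⁻¹ * p⁻¹ * p := by field_simp
    have hnn : 0 ≤ t ^ p * |Real.log t| := by positivity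
    calc (t ^ p * |Real.log t|) ^ γ ≤ ((Real.exp 1 * p)⁻¹) ^ γ := Real.rpow_le_rpow hnn hkey hγ0.le
      _ = (Real.exp 1 * p) ^ (-γ) := by
          rw [Real.inv_rpow (by positivity), ← Real.rpow_neg (by positivity)]
      _ ≤ _ := by linarith
  · -- t > 1
    have ht0 : 0 < t := by linarith
    have hlog0 : 0 ≤ Real.log t := Real.log_nonneg h1.le
    have habs : |Real.log t| = Real.log t := abs_of_nonneg hlog0
    have hsqrt : Real.log t ≤ 2 * t ^ ((1:ℝ)/2) := by
      have h2 : Real.log (t ^ ((1:ℝ)/2)) ≤ t ^ ((1:ℝ)/2) - 1 :=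
        Real.log_le_sub_one_of_pos (Real.rpow_pos_of_pos ht0 _)
      rw [Real.log_rpow ht0] at h2
      linarith
    have hkey : t ^ p * |Real.log t| ≤ 2 * t ^ (p + 1/2) := by
      rw [habs, Real.rpow_add ht0]
      calc t ^ p * Real.log t ≤ t ^ p * (2 * t ^ ((1:ℝ)/2)) :=
            mul_le_mul_of_nonneg_left hsqrt (by positivity)
        _ = 2 * (t ^ p * t ^ ((1:ℝ)/2)) := by ring
    have hnn : 0 ≤ t ^ p * |Real.log t| := by positivity
    have hexp : (p + 1/2) * γ = p + 1 := by
      rw [hγ]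
      have : (2*p+1) ≠ 0 := by linarith
      field_simp
    calc (t ^ p * |Real.log t|) ^ γ ≤ (2 * t ^ (p + 1/2)) ^ γ :=
          Real.rpow_le_rpow hnn hkey hγ0.le
      _ = 2 ^ γ * t ^ (p + 1) := by
          rw [Real.mul_rpow (by norm_num) (by positivity),
            ← Real.rpow_mul ht0.le, hexp]
      _ ≤ _ := by linarith

/-- If `μ` is a finite measure, `p > 1`, `γ = (2p+2)/(2p+1)` and `|f|^(p+1)` is
integrable, then `(|f|^p |log |f||)^γ` is integrable and
`∫ (|f|^p |log |f||)^γ ≤ (e p)^(−γ) μ(X) + 2^γ ∫ |f|^(p+1)`. -/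
theorem stmt_7 {X : Type*} [MeasurableSpace X] (μ : Measure X) [IsFiniteMeasure μ]
    (p γ : ℝ) (hp : 1 < p) (hγ : γ = (2 * p + 2) / (2 * p + 1))
    (f : X → ℝ) (hf : Measurable f)
    (hint : Integrable (fun x => |f x| ^ (p + 1)) μ) :
    Integrable (fun x => (|f x| ^ p * |Real.log (abs (f x))|) ^ γ) μ ∧
      ∫ x, (|f x| ^ p * |Real.log (abs (f x))|) ^ γ ∂μ ≤
        (Real.exp 1 * p) ^ (-γ) * (μ Set.univ).toReal
          + 2 ^ γ * ∫ x, |f x| ^ (p + 1) ∂μ := by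
  have hmeas : Measurable (fun x => (|f x| ^ p * |Real.log (abs (f x))|) ^ γ) := by
    measurability
  have hbd : ∀ x, (|f x| ^ p * |Real.log (abs (f x))|) ^ γ ≤
      (Real.exp 1 * p) ^ (-γ) + 2 ^ γ * |f x| ^ (p + 1) := fun x =>
    key_bound p γ hp hγ (|f x|) (abs_nonneg _)
  have hbint : Integrable (fun x => (Real.exp 1 * p) ^ (-γ) + 2 ^ γ * |f x| ^ (p + 1)) μ :=
    (integrable_const _).add (hint.const_mul _)
  have hnn : ∀ x, 0 ≤ (|f x| ^ p * |Real.log (abs (f x))|) ^ γ := fun x =>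
    Real.rpow_nonneg (by positivity) γ
  have hInt : Integrable (fun x => (|f x| ^ p * |Real.log (abs (f x))|) ^ γ) μ := by
    refine hbint.mono' hmeas.aestronglyMeasurable (Filter.Eventually.of_forall fun x => ?_)
    rw [Real.norm_eq_abs, abs_of_nonneg (hnn x)]
    exact hbd x
  refine ⟨hInt, ?_⟩
  calc ∫ x, (|f x| ^ p * |Real.log (abs (f x))|) ^ γ ∂μ
      ≤ ∫ x, ((Real.exp 1 * p) ^ (-γ) + 2 ^ γ * |f x| ^ (p + 1)) ∂μ :=
        integral_mono hInt hbint hbd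
    _ = (Real.exp 1 * p) ^ (-γ) * (μ Set.univ).toReal
          + 2 ^ γ * ∫ x, |f x| ^ (p + 1) ∂μ := by
        rw [integral_add (integrable_const _) (hint.const_mul _),
          integral_const, smul_eq_mul, integral_const_mul, mul_comm, measureReal_def]
end

section
/- Let p > 1, S > 0 and 0 < δ < (p+1)/2 be reals, and set r(δ) = (δ/S^(p+2))^(1/p). Let a > 0, B ∈ ℝ, and C ≥ 0 satisfy B ≤ S^(p+2)·a^(p+2) and δ·a² = B. Then a²/2 − B/(p+1) + C/(p+1)² ≥ (1/2 − δ/(p+1))·r(δ)², and (1/2 − δ/(p+1))·r(δ)² > 0. -/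
/-- Scalar lower bound for the depth of the family of potential wells: if
`0 < δ < (p+1)/2`, `r(δ) = (δ/S^(p+2))^(1/p)`, `a > 0`, `B ≤ S^(p+2) a^(p+2)`,
`C ≥ 0` and `δ a² = B`, then
`a²/2 − B/(p+1) + C/(p+1)² ≥ (1/2 − δ/(p+1)) r(δ)²` and `(1/2 − δ/(p+1)) r(δ)² > 0`. -/
theorem stmt_9 (p S δ : ℝ) (hp : 1 < p) (hS : 0 < S) (hδ0 : 0 < δ)
    (hδ1 : δ < (p + 1) / 2)
    (r : ℝ) (hr : r = (δ / S ^ (p + 2)) ^ (1 / p))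
    (a B C : ℝ) (ha : 0 < a) (hC : 0 ≤ C)
    (hB : B ≤ S ^ (p + 2) * a ^ (p + 2)) (hN : δ * a ^ 2 = B) :
    (1 / 2 - δ / (p + 1)) * r ^ 2 ≤ a ^ 2 / 2 - B / (p + 1) + C / (p + 1) ^ 2 ∧
      0 < (1 / 2 - δ / (p + 1)) * r ^ 2 := by
  have hp0 : (0:ℝ) < p := by linarith
  have hp1 : (0:ℝ) < p + 1 := by linarith
  have hSp : 0 < S ^ (p + 2) := Real.rpow_pos_of_pos hS _
  have hbase : 0 < δ / S ^ (p + 2) := div_pos hδ0 hSp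
  have hrpos : 0 < r := hr ▸ Real.rpow_pos_of_pos hbase _
  have hcoef : 0 < 1 / 2 - δ / (p + 1) := by
    rw [sub_pos, div_lt_div_iff₀ hp1 (by norm_num : (0:ℝ) < 2)]
    linarith
  -- a^(p+2) = a^p * a^2
  have hsplit : a ^ (p + 2) = a ^ p * a ^ (2:ℕ) := by
    rw [Real.rpow_add ha, Real.rpow_two]
  have hap : 0 < a ^ p := Real.rpow_pos_of_pos ha _
  have h1 : δ ≤ S ^ (p + 2) * a ^ p := by
    have h2 : δ * a ^ 2 ≤ S ^ (p + 2) * a ^ p * a ^ 2 := by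
      rw [hN]; rw [hsplit] at hB; linarith [hB]
    have ha2 : 0 < a ^ 2 := by positivity
    exact le_of_mul_le_mul_right h2 ha2
  have h3 : δ / S ^ (p + 2) ≤ a ^ p := (div_le_iff₀ hSp).mpr (by linarith [h1])
  have hra : r ≤ a := by
    have := Real.rpow_le_rpow (le_of_lt hbase) h3 (by positivity : (0:ℝ) ≤ 1 / p)
    rwa [← Real.rpow_mul ha.le, mul_one_div, div_self hp0.ne',
      Real.rpow_one, ← hr] at this
  have hr2 : r ^ 2 ≤ a ^ 2 := by nlinarith
  constructor
  · rw [← hN]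
    have hCp : 0 ≤ C / (p + 1) ^ 2 := by positivity
    have : (1 / 2 - δ / (p + 1)) * r ^ 2 ≤ (1 / 2 - δ / (p + 1)) * a ^ 2 :=
      mul_le_mul_of_nonneg_left hr2 hcoef.le
    have hid : (1 / 2 - δ / (p + 1)) * a ^ 2 = a ^ 2 / 2 - δ * a ^ 2 / (p + 1) := by
      field_simp
    linarith
  · positivity
end

section
/- Let α > 0 and t₀ ∈ ℝ. There is no function N : [t₀, ∞) → ℝ that is twice differentiable on [t₀, ∞) and satisfies: N(t) > 0 for all t ≥ t₀, N′(t₀) > 0, and N(t)·N″(t) − (1+α)·N′(t)² ≥ 0 for all t ≥ t₀. Equivalently, any such N must cease to exist (blow up) in finite time. -/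
/-- Concavity (Levine-type) blow-up lemma: for `α > 0` there is no function
`N : [t₀,∞) → ℝ`, twice differentiable on `[t₀,∞)`, with `N > 0` on `[t₀,∞)`,
`N′(t₀) > 0` and `N N″ − (1+α) N′² ≥ 0` on `[t₀,∞)`. -/
theorem stmt_12 (α t₀ : ℝ) (hα : 0 < α) :
    ¬ ∃ (N N' N'' : ℝ → ℝ),
        (∀ t, t₀ ≤ t → HasDerivWithinAt N (N' t) (Set.Ici t₀) t) ∧
        (∀ t, t₀ ≤ t → HasDerivWithinAt N' (N'' t) (Set.Ici t₀) t) ∧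
        (∀ t, t₀ ≤ t → 0 < N t) ∧
        0 < N' t₀ ∧
        (∀ t, t₀ ≤ t → 0 ≤ N t * N'' t - (1 + α) * N' t ^ 2) := by
  rintro ⟨N, N', N'', hN, hN', hpos, hN'0, hineq⟩
  -- G t = N' t * (N t) ^ (-(1+α)) is monotone on [t₀, ∞)
  set G : ℝ → ℝ := fun t => N' t * N t ^ (-(1 + α)) with hG
  -- derivative of G within Ici t₀
  have hGd : ∀ t, t₀ ≤ t → HasDerivWithinAt G
      (N'' t * N t ^ (-(1 + α)) +
        (N' t * (-(1 + α)) * N t ^ (-(1 + α) - 1)) * N' t) (Set.Ici t₀) t := by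
    intro t ht
    exact ((hN' t ht).mul ((hN t ht).rpow_const (Or.inl (hpos t ht).ne'))).congr_deriv
      (by ring)
  have hGd_nonneg : ∀ t, t₀ ≤ t →
      0 ≤ N'' t * N t ^ (-(1 + α)) +
        (N' t * (-(1 + α)) * N t ^ (-(1 + α) - 1)) * N' t := by
    intro t ht
    have hNt := hpos t ht
    have key : N'' t * N t ^ (-(1 + α)) + (N' t * (-(1 + α)) * N t ^ (-(1 + α) - 1)) * N' t
        = (N t * N'' t - (1 + α) * N' t ^ 2) * N t ^ (-(1 + α) - 1) := by
      have h1 : N t ^ (-(1 + α)) = N t * N t ^ (-(1 + α) - 1) := by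
        have h2 := Real.rpow_add hNt 1 (-(1 + α) - 1)
        rw [Real.rpow_one] at h2
        rw [← h2]; ring_nf
      rw [h1]; ring
    rw [key]
    exact mul_nonneg (hineq t ht) (Real.rpow_pos_of_pos hNt _).le
  have hGmono : MonotoneOn G (Set.Ici t₀) := by
    apply monotoneOn_of_deriv_nonneg (convex_Ici t₀)
    · exact fun t ht => ((hGd t ht).continuousWithinAt)
    · intro t ht
      rw [interior_Ici] at ht
      exact (((hGd t (le_of_lt ht)).hasDerivAt (Ici_mem_nhds ht)).differentiableAt).differentiableWithinAt
    · intro t ht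
      rw [interior_Ici] at ht
      rw [((hGd t (le_of_lt ht)).hasDerivAt (Ici_mem_nhds ht)).deriv]
      exact hGd_nonneg t (le_of_lt ht)
  set c : ℝ := G t₀ with hc
  have hc_pos : 0 < c := mul_pos hN'0 (Real.rpow_pos_of_pos (hpos t₀ le_rfl) _)
  have hGc : ∀ t, t₀ ≤ t → c ≤ G t := fun t ht =>
    hGmono Set.self_mem_Ici ht ht
  -- H t = N t ^ (-α); P t = H t + (α*c)*t is antitone
  set H : ℝ → ℝ := fun t => N t ^ (-α) with hH
  set P : ℝ → ℝ := fun t => H t + (α * c) * t with hP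
  have hPd : ∀ t, t₀ ≤ t → HasDerivWithinAt P
      (N' t * (-α) * N t ^ (-α - 1) + α * c) (Set.Ici t₀) t := by
    intro t ht
    exact ((hN t ht).rpow_const (Or.inl (hpos t ht).ne')).add
      ((hasDerivWithinAt_id t _).const_mul (α * c) |>.congr_deriv (by ring))
  have hPd_nonpos : ∀ t, t₀ ≤ t → N' t * (-α) * N t ^ (-α - 1) + α * c ≤ 0 := by
    intro t ht
    have h1 : N' t * N t ^ (-α - 1) = G t := by
      simp only [hG]
      congr 2
      ring
    have h2 : c ≤ N' t * N t ^ (-α - 1) := h1 ▸ hGc t ht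
    nlinarith
  have hPanti : AntitoneOn P (Set.Ici t₀) := by
    apply antitoneOn_of_deriv_nonpos (convex_Ici t₀)
    · exact fun t ht => ((hPd t ht).continuousWithinAt)
    · intro t ht
      rw [interior_Ici] at ht
      exact (((hPd t (le_of_lt ht)).hasDerivAt (Ici_mem_nhds ht)).differentiableAt).differentiableWithinAt
    · intro t ht
      rw [interior_Ici] at ht
      rw [((hPd t (le_of_lt ht)).hasDerivAt (Ici_mem_nhds ht)).deriv]
      exact hPd_nonpos t (le_of_lt ht)
  -- choose a large time
  set T : ℝ := t₀ + (H t₀ + 1) / (α * c) with hT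
  have hαc : 0 < α * c := mul_pos hα hc_pos
  have hHt0 : 0 < H t₀ := Real.rpow_pos_of_pos (hpos t₀ le_rfl) _
  have hTge : t₀ ≤ T := by
    have h := div_pos (show (0:ℝ) < H t₀ + 1 by linarith) hαc
    rw [hT]; linarith
  have hPT : P T ≤ P t₀ := hPanti Set.self_mem_Ici hTge hTge
  have hHT : 0 < H T := Real.rpow_pos_of_pos (hpos T hTge) _
  have : H T + (α * c) * T ≤ H t₀ + (α * c) * t₀ := hPT
  have hexp : (α * c) * T = (α * c) * t₀ + (H t₀ + 1) := by
    rw [hT]; field_simp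
  nlinarith
end
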